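/- (Lemma 2: interval lengths in a multi-switch schedule.) In the setting of Lemma 1 (rotations R_Z, R_X, times τ₁,…,τ_N > 0, vectors r_k, quantities Δ₀ = 0, Δ_k = τ_k − Δ_{k−1}, and switching conditions giving (−1)ⁿ sin(Δ_n) r₀y = r₀z for 1 ≤ n ≤ N−1), assume additionally that r₀y ≠ 0, that τ₁ ∈ (π/2, π), and that τ_k ∈ (0, π) for every k with 2 ≤ k ≤ N−1. Then for every n with 1 ≤ n ≤ N−1: Δ_n = τ₁ if n is odd and Δ_n = τ₁ − π if n is even; equivalently, setting μ := τ₁ − π = arcsin(r₀z/r₀y) < 0, one has Δ_n = π + μ for n odd and Δ_n = μ for n even, and hence τ_n = 2τ₁ − π for every n with 2 ≤ n ≤ N−1. -/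

import Mathlib

open Matrix

noncomputable section

namespace Stmt19

/-- Rotation about the z-axis (the generator `K_C` in the spin-1/2 problem). -/
def RZ (t : ℝ) : Matrix (Fin 3) (Fin 3) ℝ :=
  !![Real.cos t, -Real.sin t, 0; Real.sin t, Real.cos t, 0; 0, 0, 1]

/-- Rotation about the x-axis (the generator `K_B` in the spin-1/2 problem). -/
def RX (t : ℝ) : Matrix (Fin 3) (Fin 3) ℝ :=
  !![1, 0, 0; 0, Real.cos t, -Real.sin t; 0, Real.sin t, Real.cos t]

lemma RZ_mulVec (t a b c : ℝ) :
    (RZ t).mulVec ![a, b, c] =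
      ![Real.cos t * a - Real.sin t * b, Real.sin t * a + Real.cos t * b, c] := by
  funext i
  fin_cases i <;>
    simp [RZ, Matrix.mulVec, dotProduct, Fin.sum_univ_three] <;> ring

lemma RX_mulVec (t a b c : ℝ) :
    (RX t).mulVec ![a, b, c] =
      ![a, Real.cos t * b - Real.sin t * c, Real.sin t * b + Real.cos t * c] := by
  funext i
  fin_cases i <;>
    simp [RX, Matrix.mulVec, dotProduct, Fin.sum_univ_three] <;> ring

lemma sin_eq_aux1 (t d : ℝ) (ht1 : Real.pi / 2 < t) (ht2 : t < Real.pi)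
    (hd1 : -t < d) (hd2 : d < Real.pi - t)
    (h : Real.sin d = Real.sin (t - Real.pi)) : d = t - Real.pi := by
  have hpi := Real.pi_pos
  by_cases hc : -(Real.pi / 2) ≤ d
  · exact Real.injOn_sin (Set.mem_Icc.mpr ⟨hc, by linarith⟩)
      (Set.mem_Icc.mpr ⟨by linarith, by linarith⟩) h
  · push_neg at hc
    have h2 : Real.sin (-Real.pi - d) = Real.sin (t - Real.pi) := by
      rw [Real.sin_sub, Real.sin_neg, Real.sin_pi, Real.cos_neg, Real.cos_pi, ← h]; ring
    have := Real.injOn_sin (Set.mem_Icc.mpr ⟨by linarith, by linarith⟩)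
      (Set.mem_Icc.mpr ⟨by linarith, by linarith⟩) h2
    linarith

lemma sin_eq_aux2 (t d : ℝ) (ht1 : Real.pi / 2 < t) (ht2 : t < Real.pi)
    (hd1 : Real.pi - t < d) (hd2 : d < 2 * Real.pi - t)
    (h : Real.sin d = Real.sin t) : d = t := by
  have hpi := Real.pi_pos
  by_cases hc : d ≤ Real.pi / 2
  · have h' : Real.sin d = Real.sin (Real.pi - t) := by rw [Real.sin_pi_sub]; exact h
    have := Real.injOn_sin (Set.mem_Icc.mpr ⟨by linarith, hc⟩)
      (Set.mem_Icc.mpr ⟨by linarith, by linarith⟩) h'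
    linarith
  · push_neg at hc
    have h2 : Real.sin (Real.pi - d) = Real.sin (Real.pi - t) := by
      rw [Real.sin_pi_sub, Real.sin_pi_sub]; exact h
    have := Real.injOn_sin (Set.mem_Icc.mpr ⟨by linarith, by linarith⟩)
      (Set.mem_Icc.mpr ⟨by linarith, by linarith⟩) h2
    linarith

/-- **Lemma 2** (interval lengths in a multi-switch schedule): in the setting of Lemma 1,
if `r₀y ≠ 0`, `τ₁ ∈ (π/2, π)` and `τ_k ∈ (0, π)` for `2 ≤ k ≤ N−1`, then `Δ_n = τ₁` for `n`
odd and `Δ_n = τ₁ − π` for `n` even (`1 ≤ n ≤ N−1`); equivalently, with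
`μ := τ₁ − π = arcsin(r₀z/r₀y) < 0`, `Δ_n = π + μ` for `n` odd and `Δ_n = μ` for `n` even,
and hence `τ_n = 2τ₁ − π` for all `2 ≤ n ≤ N−1`. -/
theorem multi_switch_interval_lengths
    (r0y r0z : ℝ) (hr0y : r0y ≠ 0) (N : ℕ) (hN : 1 ≤ N)
    (τ : ℕ → ℝ) (hτ : ∀ k, 1 ≤ k → k ≤ N → 0 < τ k)
    (hτ1 : τ 1 ∈ Set.Ioo (Real.pi / 2) Real.pi)
    (hτk : ∀ k, 2 ≤ k → k ≤ N - 1 → τ k ∈ Set.Ioo 0 Real.pi)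
    (r : ℕ → Fin 3 → ℝ)
    (hr0 : r 0 = ![0, r0y, r0z])
    (hrec : ∀ k, 1 ≤ k → k ≤ N →
      r k = (if Odd k then RZ (τ k) else RX (τ k)).mulVec (r (k - 1)))
    (Δ : ℕ → ℝ) (hΔ0 : Δ 0 = 0) (hΔ : ∀ k, 1 ≤ k → Δ k = τ k - Δ (k - 1))
    (hswitch : ∀ n, 1 ≤ n → n ≤ N - 1 → r n 0 = r0z ∧ r n 2 = r0z) :
    (∀ n, 1 ≤ n → n ≤ N - 1 →
      (Odd n → Δ n = τ 1) ∧ (Even n → Δ n = τ 1 - Real.pi)) ∧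
    τ 1 - Real.pi < 0 ∧
    (2 ≤ N → τ 1 - Real.pi = Real.arcsin (r0z / r0y)) ∧
    (∀ n, 2 ≤ n → n ≤ N - 1 → τ n = 2 * τ 1 - Real.pi) := by
  have hpi := Real.pi_pos
  obtain ⟨ht1, ht2⟩ := hτ1
  -- the basic relation coming from the first switching condition
  have hbase : 2 ≤ N → -Real.sin (τ 1) * r0y = r0z := by
    intro h2
    have hr1 : r 1 = (RZ (τ 1)).mulVec (r 0) := by
      have := hrec 1 le_rfl (by omega)
      simpa [odd_one] using this
    rw [hr0, RZ_mulVec] at hr1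
    have hs := (hswitch 1 le_rfl (by omega)).1
    rw [hr1] at hs
    simp at hs
    linarith
  -- main induction
  have key : ∀ n, 1 ≤ n → n ≤ N - 1 →
      ((Odd n → Δ n = τ 1) ∧ (Even n → Δ n = τ 1 - Real.pi)) ∧
        r n = ![r0z, Real.cos (Δ n) * r0y, r0z] := by
    intro n
    induction n with
    | zero => omega
    | succ m ih =>
      intro _ hle
      have hb : -Real.sin (τ 1) * r0y = r0z := hbase (by omega)
      rcases Nat.eq_zero_or_pos m with hm | hm
      · -- base case n = 1
        subst hm
        have hD1 : Δ 1 = τ 1 := by rw [hΔ 1 le_rfl]; simp [hΔ0]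
        have hr1 : r 1 = (RZ (τ 1)).mulVec (r 0) := by
          have := hrec 1 le_rfl (by omega)
          simpa [odd_one] using this
        rw [hr0, RZ_mulVec] at hr1
        refine ⟨⟨fun _ => hD1, fun he => by simp [Nat.even_iff] at he⟩, ?_⟩
        rw [hr1, hD1]
        funext i
        fin_cases i <;> simp <;> linarith
      · -- inductive step: m ≥ 1, n = m + 1
        obtain ⟨⟨ihO, ihE⟩, ihr⟩ := ih hm (by omega)
        have hD : Δ (m + 1) = τ (m + 1) - Δ m := by
          have := hΔ (m + 1) (by omega); simpa using this
        obtain ⟨hτa, hτb⟩ := hτk (m + 1) (by omega) (by omega)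
        have hrm : r (m + 1) =
            (if Odd (m + 1) then RZ (τ (m + 1)) else RX (τ (m + 1))).mulVec (r m) := by
          have := hrec (m + 1) (by omega) (by omega); simpa using this
        have hsw := hswitch (m + 1) (by omega) (by omega)
        rcases Nat.even_or_odd m with hme | hmo
        · -- m even, m + 1 odd : apply RZ
          have hDm : Δ m = τ 1 - Real.pi := ihE hme
          have hodd : Odd (m + 1) := Even.add_one hme
          rw [if_pos hodd, ihr, RZ_mulVec] at hrm
          have h0 := hsw.1
          rw [hrm] at h0
          simp only [Matrix.cons_val_zero] at h0
          have h0' := h0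
          rw [hDm, ← hb, Real.cos_sub_pi] at h0'
          have hEq : Real.sin (Δ (m + 1)) * r0y = Real.sin (τ 1) * r0y := by
            rw [hD, hDm,
              show τ (m + 1) - (τ 1 - Real.pi) = (τ (m + 1) - τ 1) + Real.pi by ring,
              Real.sin_add, Real.sin_pi, Real.cos_pi, Real.sin_sub]
            linear_combination -h0'
          have hsin := mul_right_cancel₀ hr0y hEq
          have hDval : Δ (m + 1) = τ 1 := by
            apply sin_eq_aux2 (τ 1) (Δ (m + 1)) ht1 ht2 _ _ hsin
            · rw [hD, hDm]; linarith
            · rw [hD, hDm]; linarith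
          have hcomp : Real.sin (τ (m + 1)) * r0z
              + Real.cos (τ (m + 1)) * (Real.cos (Δ m) * r0y)
              = Real.cos (Δ (m + 1)) * r0y := by
            rw [hD, hDm, ← hb, Real.cos_sub_pi,
              show τ (m + 1) - (τ 1 - Real.pi) = (τ (m + 1) - τ 1) + Real.pi by ring,
              Real.cos_add, Real.cos_pi, Real.sin_pi, Real.cos_sub]
            ring
          refine ⟨⟨fun _ => hDval, fun he => by
            rw [Nat.even_iff] at he hme; omega⟩, ?_⟩
          rw [hrm]
          funext i
          fin_cases i
          · simpa using h0
          · simpa using hcomp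
          · simp
        · -- m odd, m + 1 even : apply RX
          have hDm : Δ m = τ 1 := ihO hmo
          have hnodd : ¬ Odd (m + 1) := by
            rw [Nat.odd_iff] at hmo ⊢; omega
          rw [if_neg hnodd, ihr, RX_mulVec] at hrm
          have h0 := hsw.2
          rw [hrm] at h0
          simp only [Matrix.cons_val_two, Matrix.tail_cons, Matrix.head_cons] at h0
          have h0' := h0
          rw [hDm, ← hb] at h0'
          have hEq : Real.sin (Δ (m + 1)) * r0y = Real.sin (τ 1 - Real.pi) * r0y := by
            rw [hD, hDm, Real.sin_sub_pi, Real.sin_sub]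
            linear_combination h0'
          have hsin := mul_right_cancel₀ hr0y hEq
          have hDval : Δ (m + 1) = τ 1 - Real.pi := by
            apply sin_eq_aux1 (τ 1) (Δ (m + 1)) ht1 ht2 _ _ hsin
            · rw [hD, hDm]; linarith
            · rw [hD, hDm]; linarith
          have hcomp : Real.cos (τ (m + 1)) * (Real.cos (Δ m) * r0y)
              - Real.sin (τ (m + 1)) * r0z = Real.cos (Δ (m + 1)) * r0y := by
            rw [hD, hDm, ← hb, Real.cos_sub]
            ring
          refine ⟨⟨fun ho => by rw [Nat.odd_iff] at ho hmo; omega,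
            fun _ => hDval⟩, ?_⟩
          rw [hrm]
          funext i
          fin_cases i
          · simp
          · simpa using hcomp
          · simpa using h0
  refine ⟨fun n h1 h2 => (key n h1 h2).1, by linarith, ?_, ?_⟩
  · intro h2
    have hb := hbase h2
    have hdiv : r0z / r0y = Real.sin (τ 1 - Real.pi) := by
      rw [Real.sin_sub_pi]; field_simp [← hb]; linear_combination -hb
    rw [hdiv, Real.arcsin_sin (by linarith) (by linarith)]
  · intro n h2 hle
    have hΔn := hΔ n (by omega)
    have h1 := key n (by omega) hle
    have h1' := key (n - 1) (by omega) (by omega)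
    rcases Nat.even_or_odd n with he | ho
    · have e1 : Δ n = τ 1 - Real.pi := h1.1.2 he
      have e2 : Δ (n - 1) = τ 1 := h1'.1.1 (by rw [Nat.odd_iff]; rw [Nat.even_iff] at he; omega)
      rw [e1, e2] at hΔn; linarith
    · have e1 : Δ n = τ 1 := h1.1.1 ho
      have e2 : Δ (n - 1) = τ 1 - Real.pi :=
        h1'.1.2 (by rw [Nat.even_iff]; rw [Nat.odd_iff] at ho; omega)
      rw [e1, e2] at hΔn; linarith

end Stmt19
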